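/- Let (X, d) be a compact metric space, c, cₙ : X × X → [0, ∞) continuous with cₙ → c uniformly, μₙ ⇀ μ, νₙ ⇀ ν, γₙ ∈ Π(μₙ, νₙ) with γₙ ⇀ γ, and suppose φₙ, ψₙ are uniformly bounded L-Lipschitz functions with φₙ → φ, ψₙ → ψ uniformly and φₙ(x) + ψₙ(y) = cₙ(x, y) on the support of γₙ (γₙ-a.e.). Then ∫ φ dμ + ∫ ψ dν = ∫ c dγ, hence γ is an optimal plan and (φ, ψ) are optimal potentials for the cost c between μ and ν. -/

import Mathlib

open MeasureTheory Filter
open scoped Topology NNReal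

lemma myInt {X : Type*} [TopologicalSpace X] [CompactSpace X] [MeasurableSpace X]
    [OpensMeasurableSpace X] {f : X → ℝ} (hf : Continuous f) (μ : Measure X)
    [IsFiniteMeasure μ] : Integrable f μ :=
  hf.integrable_of_hasCompactSupport (HasCompactSupport.of_compactSpace f)

lemma myTendsto {X : Type*} [MetricSpace X] [CompactSpace X] [MeasurableSpace X]
    [BorelSpace X] (fn : ℕ → X → ℝ) (f : X → ℝ) (hfn : ∀ n, Continuous (fn n))
    (hu : TendstoUniformly fn f atTop)
    (μn : ℕ → ProbabilityMeasure X) (μ : ProbabilityMeasure X)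
    (hμ : Tendsto μn atTop (𝓝 μ)) :
    Tendsto (fun n => ∫ x, fn n x ∂(μn n : Measure X)) atTop
      (𝓝 (∫ x, f x ∂(μ : Measure X))) := by
  have hf : Continuous f := hu.continuous (Eventually.of_forall hfn).frequently
  have h1 : Tendsto (fun n => ∫ x, f x ∂(μn n : Measure X)) atTop
      (𝓝 (∫ x, f x ∂(μ : Measure X))) := by
    have := ProbabilityMeasure.tendsto_iff_forall_integral_tendsto.mp hμ
      (BoundedContinuousFunction.mkOfCompact ⟨f, hf⟩)
    simpa using this
  have h2 : Tendsto (fun n => (∫ x, fn n x ∂(μn n : Measure X))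
      - ∫ x, f x ∂(μn n : Measure X)) atTop (𝓝 0) := by
    rw [Metric.tendsto_atTop]
    intro ε hε
    have := Metric.tendstoUniformly_iff.mp hu (ε/2) (by linarith)
    rw [eventually_atTop] at this
    obtain ⟨N, hN⟩ := this
    refine ⟨N, fun n hn => ?_⟩
    rw [Real.dist_eq, sub_zero]
    rw [← integral_sub (myInt (hfn n) _) (myInt hf _)]
    calc |∫ x, (fn n x - f x) ∂(μn n : Measure X)|
        ≤ ∫ x, |fn n x - f x| ∂(μn n : Measure X) := by
          simpa [Real.norm_eq_abs] using
            norm_integral_le_integral_norm (μ := (μn n : Measure X)) (fun x => fn n x - f x)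
      _ ≤ ∫ _x, (ε/2) ∂(μn n : Measure X) := by
          apply integral_mono ((myInt (hfn n) _).sub (myInt hf _)).abs
            (integrable_const _)
          intro x
          have := hN n hn x
          rw [Real.dist_eq, abs_sub_comm] at this
          exact le_of_lt this
      _ = ε/2 := by simp
      _ < ε := by linarith
  have := h2.add h1
  simpa using this

lemma myPair {X : Type*} [MetricSpace X] [CompactSpace X] [MeasurableSpace X]
    [BorelSpace X] (γ' : ProbabilityMeasure (X × X)) (μ ν : ProbabilityMeasure X)
    (h1 : (γ' : Measure (X × X)).map Prod.fst = (μ : Measure X))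
    (h2 : (γ' : Measure (X × X)).map Prod.snd = (ν : Measure X))
    (f g : X → ℝ) (hf : Continuous f) (hg : Continuous g) :
    (∫ x, f x ∂(μ : Measure X)) + ∫ y, g y ∂(ν : Measure X)
      = ∫ p, (f p.1 + g p.2) ∂(γ' : Measure (X × X)) := by
  rw [← h1, ← h2,
    integral_map measurable_fst.aemeasurable hf.aestronglyMeasurable,
    integral_map measurable_snd.aemeasurable hg.aestronglyMeasurable]
  exact (integral_add (myInt (hf.comp continuous_fst) _)
    (myInt (hg.comp continuous_snd) _)).symm

/-- Stability of optimal transport: with `cₙ → c` uniformly, `μₙ ⇀ μ`, `νₙ ⇀ ν`,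
couplings `γₙ ∈ Π(μₙ, νₙ)` with `γₙ ⇀ γ`, and uniformly bounded `L`-Lipschitz
potentials `φₙ, ψₙ` converging uniformly to `φ, ψ`, admissible for `cₙ` and attaining
equality `γₙ`-a.e., one gets `∫φ dμ + ∫ψ dν = ∫ c dγ`; hence `γ` is an optimal plan
and `(φ, ψ)` are optimal potentials for the cost `c` between `μ` and `ν`. -/
theorem stmt_9 {X : Type*} [MetricSpace X] [CompactSpace X]
    [MeasurableSpace X] [BorelSpace X]
    (c : X × X → ℝ) (cn : ℕ → X × X → ℝ)
    (hc : Continuous c) (hcn : ∀ n, Continuous (cn n))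
    (hc0 : ∀ p, 0 ≤ c p) (hcn0 : ∀ n p, 0 ≤ cn n p)
    (hcu : TendstoUniformly cn c atTop)
    (μn νn : ℕ → ProbabilityMeasure X) (μ ν : ProbabilityMeasure X)
    (γn : ℕ → ProbabilityMeasure (X × X)) (γ : ProbabilityMeasure (X × X))
    (hμ : Tendsto μn atTop (𝓝 μ)) (hν : Tendsto νn atTop (𝓝 ν))
    (hγ : Tendsto γn atTop (𝓝 γ))
    (hmarg1 : ∀ n, (γn n : Measure (X × X)).map Prod.fst = (μn n : Measure X))
    (hmarg2 : ∀ n, (γn n : Measure (X × X)).map Prod.snd = (νn n : Measure X))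
    (L : ℝ≥0) (B : ℝ) (φ ψ : X → ℝ) (φn ψn : ℕ → X → ℝ)
    (hφLip : ∀ n, LipschitzWith L (φn n)) (hψLip : ∀ n, LipschitzWith L (ψn n))
    (hφB : ∀ n x, |φn n x| ≤ B) (hψB : ∀ n x, |ψn n x| ≤ B)
    (hφu : TendstoUniformly φn φ atTop) (hψu : TendstoUniformly ψn ψ atTop)
    (hadm : ∀ n x y, φn n x + ψn n y ≤ cn n (x, y))
    (heq : ∀ n, ∀ᵐ p ∂(γn n : Measure (X × X)), φn n p.1 + ψn n p.2 = cn n p)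
    (hγmarg1 : (γ : Measure (X × X)).map Prod.fst = (μ : Measure X))
    (hγmarg2 : (γ : Measure (X × X)).map Prod.snd = (ν : Measure X)) :
    ((∫ x, φ x ∂(μ : Measure X)) + ∫ y, ψ y ∂(ν : Measure X)
        = ∫ p, c p ∂(γ : Measure (X × X))) ∧
    (∀ γ' : ProbabilityMeasure (X × X),
      (γ' : Measure (X × X)).map Prod.fst = (μ : Measure X) →
      (γ' : Measure (X × X)).map Prod.snd = (ν : Measure X) →
      ∫ p, c p ∂(γ : Measure (X × X)) ≤ ∫ p, c p ∂(γ' : Measure (X × X))) ∧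
    (∀ φ' ψ' : X → ℝ, Continuous φ' → Continuous ψ' →
      (∀ x y, φ' x + ψ' y ≤ c (x, y)) →
      (∫ x, φ' x ∂(μ : Measure X)) + ∫ y, ψ' y ∂(ν : Measure X)
        ≤ (∫ x, φ x ∂(μ : Measure X)) + ∫ y, ψ y ∂(ν : Measure X)) := by
  have hφc : Continuous φ := hφu.continuous (Eventually.of_forall fun n => (hφLip n).continuous).frequently
  have hψc : Continuous ψ := hψu.continuous (Eventually.of_forall fun n => (hψLip n).continuous).frequently
  -- per-n identity
  have key : ∀ n, (∫ x, φn n x ∂(μn n : Measure X)) + ∫ y, ψn n y ∂(νn n : Measure X)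
      = ∫ p, cn n p ∂(γn n : Measure (X × X)) := by
    intro n
    rw [myPair (γn n) (μn n) (νn n) (hmarg1 n) (hmarg2 n) _ _
      (hφLip n).continuous (hψLip n).continuous]
    exact integral_congr_ae (heq n)
  -- limits
  have t1 := myTendsto φn φ (fun n => (hφLip n).continuous) hφu μn μ hμ
  have t2 := myTendsto ψn ψ (fun n => (hψLip n).continuous) hψu νn ν hν
  have t3 := myTendsto cn c hcn hcu γn γ hγ
  have hmain : (∫ x, φ x ∂(μ : Measure X)) + ∫ y, ψ y ∂(ν : Measure X)
      = ∫ p, c p ∂(γ : Measure (X × X)) := by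
    refine tendsto_nhds_unique (t1.add t2) ?_
    refine Tendsto.congr (fun n => (key n).symm) t3
  -- limit admissibility
  have hadm' : ∀ x y, φ x + ψ y ≤ c (x, y) := by
    intro x y
    refine le_of_tendsto_of_tendsto' ((hφu.tendsto_at x).add (hψu.tendsto_at y))
      (hcu.tendsto_at (x, y)) (fun n => hadm n x y)
  refine ⟨hmain, ?_, ?_⟩
  · intro γ' h1 h2
    rw [← hmain, myPair γ' μ ν h1 h2 φ ψ hφc hψc]
    refine integral_mono ((myInt (hφc.comp continuous_fst) _).add
      (myInt (hψc.comp continuous_snd) _)) (myInt hc _) ?_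
    exact fun p => hadm' p.1 p.2
  · intro φ' ψ' hφ' hψ' hadm''
    rw [hmain, myPair γ μ ν hγmarg1 hγmarg2 φ' ψ' hφ' hψ']
    refine integral_mono ((myInt (hφ'.comp continuous_fst) _).add
      (myInt (hψ'.comp continuous_snd) _)) (myInt hc _) ?_
    exact fun p => hadm'' p.1 p.2
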